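/- arXiv:2502.03244 — 2 statements merged into one kernel-verified Lean document; each statement's English description precedes it below -/
import Mathlib

section
/- Let M be an n×n row-stochastic matrix, p, q ∈ ℝⁿ probability vectors with qᵀM = pᵀ, and x ∈ ℝⁿ. Then ∑_i q[i] ((Mx)_i)² = ∑_j p[j] x_j² - (1/2) ∑_{i,k,l} q[i] M[i,k] M[i,l] (x_k - x_l)². In particular, ∑_i q[i] ((Mx)_i)² ≤ ∑_j p[j] x_j². -/
open Matrix Finset

lemma aux_var {n : ℕ} (s : Fin n → ℝ) (hs : ∑ k, s k = 1) (x : Fin n → ℝ) :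
    ∑ k, ∑ l, s k * s l * (x k - x l)^2
      = 2 * (∑ k, s k * (x k)^2) - 2 * (∑ k, s k * x k)^2 := by
  have h : ∀ k l : Fin n, s k * s l * (x k - x l)^2
      = (s k * (x k)^2) * s l - (2 * (s k * x k)) * (s l * x l) + s k * (s l * (x l)^2) := by
    intro k l; ring
  simp_rw [h, Finset.sum_add_distrib, Finset.sum_sub_distrib, ← Finset.mul_sum,
    ← Finset.sum_mul, hs]
  ring_nf
  have h2 : ∑ k, 2 * s k * x k = 2 * ∑ k, s k * x k := by
    rw [Finset.mul_sum]; exact Finset.sum_congr rfl fun _ _ => by ring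
  have h3 : ∑ k, s k * x k * 2 = (∑ k, s k * x k) * 2 := by rw [Finset.sum_mul]
  rw [h3]; ring

theorem abs_prob_weighted_norm_identity {n : ℕ} (M : Matrix (Fin n) (Fin n) ℝ)
    (hM : ∀ i j, 0 ≤ M i j) (hrow : ∀ i, ∑ j, M i j = 1)
    (p q : Fin n → ℝ)
    (hp : ∀ i, 0 ≤ p i) (hpsum : ∑ i, p i = 1)
    (hq : ∀ i, 0 ≤ q i) (hqsum : ∑ i, q i = 1)
    (habs : Matrix.vecMul q M = p) (x : Fin n → ℝ) :
    (∑ i, q i * (M.mulVec x i)^2 =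
      ∑ j, p j * (x j)^2 -
        (1/2) * ∑ i, ∑ k, ∑ l, q i * (M i k * M i l * (x k - x l)^2)) ∧
    ∑ i, q i * (M.mulVec x i)^2 ≤ ∑ j, p j * (x j)^2 := by
  have hper : ∀ i, (M.mulVec x i)^2
      = (∑ k, M i k * (x k)^2) - (1/2) * ∑ k, ∑ l, M i k * M i l * (x k - x l)^2 := by
    intro i
    have := aux_var (fun k => M i k) (hrow i) x
    simp only [Matrix.mulVec, dotProduct]
    rw [this]; ring
  have hp_eq : ∀ j, p j = ∑ i, q i * M i j := by
    intro j
    rw [← habs]; simp [Matrix.vecMul, dotProduct]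
  have key : ∑ i, q i * (M.mulVec x i)^2 =
      ∑ j, p j * (x j)^2 -
        (1/2) * ∑ i, ∑ k, ∑ l, q i * (M i k * M i l * (x k - x l)^2) := by
    simp_rw [hper, mul_sub, Finset.sum_sub_distrib]
    congr 1
    · simp_rw [hp_eq, Finset.sum_mul, Finset.mul_sum]
      rw [Finset.sum_comm]
      congr 1; ext i; congr 1; ext k; ring
    · simp_rw [Finset.mul_sum]
      exact Finset.sum_congr rfl fun i _ => Finset.sum_congr rfl fun k _ =>
        Finset.sum_congr rfl fun l _ => by ring
  refine ⟨key, ?_⟩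
  rw [key]
  have hnn : 0 ≤ ∑ i, ∑ k, ∑ l, q i * (M i k * M i l * (x k - x l)^2) := by
    apply Finset.sum_nonneg; intro i _
    apply Finset.sum_nonneg; intro k _
    apply Finset.sum_nonneg; intro l _
    exact mul_nonneg (hq i) (mul_nonneg (mul_nonneg (hM i k) (hM i l)) (sq_nonneg _))
  linarith
end

section
/- Let Π = diag(p) where p is a probability vector with all entries positive, and p_max = max_i p[i]. Let L be a symmetric positive semidefinite matrix with L𝟙 = 0, and L̃ = Π^{-1/2} L Π^{-1/2}. Then λ₂(L̃) ≥ p_max^{-1} λ₂(L), where λ₂ denotes the second smallest eigenvalue. -/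
open Matrix Finset

/-- The second smallest eigenvalue (counted with multiplicity) of a Hermitian
real matrix: the entry at index 1 of the increasingly sorted list of eigenvalues. -/
noncomputable def lambda2 {n : ℕ} (A : Matrix (Fin n) (Fin n) ℝ)
    (hA : A.IsHermitian) : ℝ :=
  ((Finset.univ.val.map hA.eigenvalues).sort (· ≤ ·)).getD 1 0


lemma dot_mulVec_mulVec {n : ℕ} (M N : Matrix (Fin n) (Fin n) ℝ) (x y : Fin n → ℝ) :
    (M *ᵥ x) ⬝ᵥ (N *ᵥ y) = x ⬝ᵥ ((Mᵀ * N) *ᵥ y) := by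
  rw [← mulVec_mulVec]
  conv_rhs => rw [dotProduct_mulVec, vecMul_transpose]

lemma lemmaD {n : ℕ} (lam : Fin n → ℝ) (hlam : ∀ i, 0 ≤ lam i)
    (e d : Fin n → ℝ) (he : e ≠ 0) (hle : ∀ i, lam i * e i = 0)
    (hde : ∑ i, d i * e i = 0) :
    ((Finset.univ.val.map lam).sort (· ≤ ·)).getD 1 0 * (∑ i, d i * d i)
      ≤ ∑ i, lam i * (d i * d i) := by
  have hsum_nonneg : 0 ≤ ∑ i, lam i * (d i * d i) :=
    Finset.sum_nonneg fun i _ => mul_nonneg (hlam i) (mul_self_nonneg _)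
  rcases hlist : ((Finset.univ.val.map lam).sort (· ≤ ·)) with _ | ⟨a, _ | ⟨b, t⟩⟩
  · simpa using hsum_nonneg
  · simpa using hsum_nonneg
  · simp only [List.getD_cons_succ, List.getD_cons_zero]
    by_cases hb : b ≤ 0
    · calc b * (∑ i, d i * d i) ≤ 0 :=
            mul_nonpos_of_nonpos_of_nonneg hb
              (Finset.sum_nonneg fun i _ => mul_self_nonneg _)
        _ ≤ _ := hsum_nonneg
    push_neg at hb
    -- key counting fact
    have hcount : (Finset.univ.filter (fun i => lam i < b)).card ≤ 1 := by
      have hs := Multiset.pairwise_sort (r := (· ≤ ·)) (s := Finset.univ.val.map lam)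
      rw [hlist] at hs
      have hbt : ∀ x ∈ b :: t, ¬ x < b := by
        intro x hx
        rcases List.mem_cons.1 hx with rfl | hx
        · exact lt_irrefl _
        · exact not_lt.2 ((List.pairwise_cons.1 (List.pairwise_cons.1 hs).2).1 x hx)
      have hmap : Multiset.filter (fun x => x < b) (Finset.univ.val.map lam)
          = Multiset.map lam (Multiset.filter (fun i => lam i < b) Finset.univ.val) := by
        rw [Multiset.filter_map]; rfl
      have hc1 : Multiset.card (Multiset.filter (fun x => x < b) (Finset.univ.val.map lam)) ≤ 1 := by
        have : (Finset.univ.val.map lam) = ((a :: b :: t : List ℝ) : Multiset ℝ) := by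
          rw [← hlist, Multiset.sort_eq]
        rw [this]
        have : Multiset.filter (fun x => x < b) ((a :: b :: t : List ℝ) : Multiset ℝ)
            = ((a :: b :: t).filter (fun x => decide (x < b)) : List ℝ) := by
          simp [Multiset.filter_coe]
        rw [this]
        have htnil : (b :: t).filter (fun x => decide (x < b)) = [] := by
          apply List.filter_eq_nil_iff.2
          intro x hx
          simpa using hbt x hx
        have h4 : (a :: b :: t).filter (fun x => decide (x < b)) = if a < b then [a] else [] := by
          rw [List.filter_cons, htnil]
          by_cases ha : a < b <;> simp [ha]
        rw [Multiset.coe_card, h4]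
        by_cases ha : a < b <;> simp [ha]
      calc (Finset.univ.filter (fun i => lam i < b)).card
          = Multiset.card (Multiset.map lam (Multiset.filter (fun i => lam i < b) Finset.univ.val)) := by
            rw [Multiset.card_map]; rfl
        _ = Multiset.card (Multiset.filter (fun x => x < b) (Finset.univ.val.map lam)) := by
            rw [hmap]
        _ ≤ 1 := hc1
    obtain ⟨i₀, hi₀⟩ : ∃ i, e i ≠ 0 := Function.ne_iff.1 he
    have hlam0 : lam i₀ = 0 := by
      rcases mul_eq_zero.1 (hle i₀) with h | h
      · exact h
      · exact absurd h hi₀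
    have hkey : ∀ i, i ≠ i₀ → b ≤ lam i := by
      intro i hi
      by_contra hlt
      push_neg at hlt
      have h1 : i ∈ Finset.univ.filter (fun j => lam j < b) := by
        simp [hlt]
      have h2 : i₀ ∈ Finset.univ.filter (fun j => lam j < b) := by
        simp [hlam0, hb]
      exact hi (Finset.card_le_one.1 hcount i h1 i₀ h2)
    have hez : ∀ i, i ≠ i₀ → e i = 0 := by
      intro i hi
      rcases mul_eq_zero.1 (hle i) with h | h
      · exact absurd h (by linarith [hkey i hi])
      · exact h
    have hd0 : d i₀ = 0 := by
      have : ∑ i, d i * e i = d i₀ * e i₀ := by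
        apply Finset.sum_eq_single
        · intro i _ hi; rw [hez i hi, mul_zero]
        · intro h; exact absurd (Finset.mem_univ _) h
      rw [hde] at this
      rcases mul_eq_zero.1 this.symm with h | h
      · exact h
      · exact absurd h hi₀
    rw [Finset.mul_sum]
    apply Finset.sum_le_sum
    intro i _
    by_cases hi : i = i₀
    · subst hi; rw [hd0]; ring_nf; simp [hlam0]
    · exact mul_le_mul_of_nonneg_right (hkey i hi) (mul_self_nonneg _)

lemma lambda2_nonneg {n : ℕ} (A : Matrix (Fin n) (Fin n) ℝ) (hA : A.IsHermitian)
    (h : ∀ i, 0 ≤ hA.eigenvalues i) : 0 ≤ lambda2 A hA := by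
  unfold lambda2
  set l := ((Finset.univ.val.map hA.eigenvalues).sort (· ≤ ·)) with hl
  by_cases hlen : 1 < l.length
  · rw [List.getD_eq_getElem l 0 hlen]
    have hmem : l[1] ∈ l := List.getElem_mem _
    have h2 : l[1] ∈ Multiset.map hA.eigenvalues Finset.univ.val := by
      rw [← Multiset.mem_sort (· ≤ ·)]; exact hmem
    obtain ⟨i, _, hi⟩ := Multiset.mem_map.1 h2
    rw [← hi]; exact h i
  · rw [List.getD_eq_default]
    omega

lemma lemmaA {n : ℕ} (L : Matrix (Fin n) (Fin n) ℝ) (hL : L.IsHermitian)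
    (hpsd : ∀ x : Fin n → ℝ, 0 ≤ x ⬝ᵥ L.mulVec x)
    (hker : L.mulVec (fun _ => 1) = 0)
    (z : Fin n → ℝ) (hz : ∑ i, z i = 0) :
    lambda2 L hL * (z ⬝ᵥ z) ≤ z ⬝ᵥ L.mulVec z := by
  rcases Nat.eq_zero_or_pos n with hn | hn
  · subst hn
    simp [lambda2, dotProduct]
  have hlam : ∀ i, 0 ≤ hL.eigenvalues i := fun i =>
    (Matrix.PosSemidef.eigenvalues_nonneg (posSemidef_iff_dotProduct_mulVec.mpr ⟨hL, fun x => by simpa using hpsd x⟩) i)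
  set U : Matrix (Fin n) (Fin n) ℝ := (hL.eigenvectorUnitary : Matrix (Fin n) (Fin n) ℝ) with hUdef
  have hU1 : U * star U = 1 := Matrix.mem_unitaryGroup_iff.1 (hL.eigenvectorUnitary).2
  have hU2 : star U * U = 1 := Matrix.mem_unitaryGroup_iff'.1 (hL.eigenvectorUnitary).2
  have hspec : L = U * Matrix.diagonal hL.eigenvalues * star U := by
    have h0 := hL.spectral_theorem
    rwa [show RCLike.ofReal ∘ hL.eigenvalues = hL.eigenvalues by
      rw [RCLike.ofReal_real_eq_id]; rfl] at h0
  have hstarT : (star U)ᵀ = U := by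
    ext i j
    simp [Matrix.star_apply]
  set d := star U *ᵥ z with hd
  set e := star U *ᵥ (fun _ => (1:ℝ)) with he'
  have hdot : ∀ v w : Fin n → ℝ, (star U *ᵥ v) ⬝ᵥ (star U *ᵥ w) = v ⬝ᵥ w := by
    intro v w
    rw [dot_mulVec_mulVec, hstarT, hU1, Matrix.one_mulVec]
  have he : e ≠ 0 := by
    intro h0
    have h1 : U *ᵥ e = (fun _ => (1:ℝ)) := by
      rw [he', mulVec_mulVec, hU1, Matrix.one_mulVec]
    rw [h0, Matrix.mulVec_zero] at h1
    have h2 := congrFun h1 ⟨0, hn⟩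
    simp at h2
  have hle : ∀ i, hL.eigenvalues i * e i = 0 := by
    have h2 : star U * L = Matrix.diagonal hL.eigenvalues * star U := by
      conv_lhs => rw [hspec]
      rw [← Matrix.mul_assoc, ← Matrix.mul_assoc, hU2, Matrix.one_mul]
    have h1 : Matrix.diagonal hL.eigenvalues *ᵥ e = 0 := by
      calc Matrix.diagonal hL.eigenvalues *ᵥ e
          = (Matrix.diagonal hL.eigenvalues * star U) *ᵥ (fun _ => 1) := by
            rw [he', mulVec_mulVec]
        _ = (star U * L) *ᵥ (fun _ => 1) := by rw [h2]
        _ = star U *ᵥ (L *ᵥ (fun _ => 1)) := by rw [mulVec_mulVec]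
        _ = 0 := by rw [hker, Matrix.mulVec_zero]
    intro i
    have h3 := congrFun h1 i
    rwa [Matrix.mulVec_diagonal] at h3
  have hq : z ⬝ᵥ L *ᵥ z = ∑ i, hL.eigenvalues i * (d i * d i) := by
    have h4 : d ⬝ᵥ (Matrix.diagonal hL.eigenvalues *ᵥ d) = z ⬝ᵥ L *ᵥ z := by
      rw [hd, mulVec_mulVec, dot_mulVec_mulVec, hstarT, ← Matrix.mul_assoc, ← hspec]
    have h5 : d ⬝ᵥ (Matrix.diagonal hL.eigenvalues *ᵥ d) = ∑ i, hL.eigenvalues i * (d i * d i) := by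
      simp only [dotProduct, Matrix.mulVec_diagonal]
      exact Finset.sum_congr rfl fun i _ => by ring
    rw [← h4, h5]
  have hzz : z ⬝ᵥ z = ∑ i, d i * d i := by
    rw [← hdot z z]; rfl
  have hde : ∑ i, d i * e i = 0 := by
    have h6 : d ⬝ᵥ e = z ⬝ᵥ (fun _ => (1:ℝ)) := hdot z _
    have h7 : z ⬝ᵥ (fun _ => (1:ℝ)) = 0 := by
      simpa [dotProduct] using hz
    calc ∑ i, d i * e i = d ⬝ᵥ e := rfl
      _ = 0 := by rw [h6, h7]
  rw [hq, hzz]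
  exact lemmaD _ hlam e d he hle hde

lemma key_step {n : ℕ} (hn : 0 < n) (p : Fin n → ℝ) (hp : ∀ i, 0 < p i)
    (hpsum : ∑ i, p i = 1)
    (pmax : ℝ) (hpmax : IsGreatest (Set.range p) pmax)
    (L : Matrix (Fin n) (Fin n) ℝ) (hL : L.IsHermitian)
    (hpsd : ∀ x : Fin n → ℝ, 0 ≤ x ⬝ᵥ L.mulVec x)
    (hker : L.mulVec (fun _ => 1) = 0)
    (Lt : Matrix (Fin n) (Fin n) ℝ)
    (hLt : Lt = (Matrix.diagonal fun i => (Real.sqrt (p i))⁻¹) * L *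
        (Matrix.diagonal fun i => (Real.sqrt (p i))⁻¹))
    (b : ℝ) (x : Fin n → ℝ) (hx0 : x ≠ 0)
    (hxw : ∑ i, Real.sqrt (p i) * x i = 0)
    (hxq : x ⬝ᵥ Lt *ᵥ x ≤ b * (x ⬝ᵥ x)) :
    pmax⁻¹ * lambda2 L hL ≤ b := by
  have hsq : ∀ i, 0 < Real.sqrt (p i) := fun i => Real.sqrt_pos.2 (hp i)
  obtain ⟨i₁, hi₁⟩ := hpmax.1
  have hpm : 0 < pmax := hi₁ ▸ hp i₁
  set y : Fin n → ℝ := fun i => (Real.sqrt (p i))⁻¹ * x i with hy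
  set c : ℝ := (∑ i, y i) / n with hc
  set z : Fin n → ℝ := fun i => y i - c with hzdef
  have hnne : (n : ℝ) ≠ 0 := Nat.cast_ne_zero.2 hn.ne'
  have hsz : ∑ i, z i = 0 := by
    simp only [hzdef]
    rw [Finset.sum_sub_distrib, Finset.sum_const, Finset.card_univ, Fintype.card_fin,
      nsmul_eq_mul, hc]
    field_simp
    ring
  have hxLt : x ⬝ᵥ Lt *ᵥ x = y ⬝ᵥ L *ᵥ y := by
    have hymul : y = (Matrix.diagonal fun i => (Real.sqrt (p i))⁻¹) *ᵥ x := by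
      funext i; rw [Matrix.mulVec_diagonal]
    rw [hLt, hymul, dot_mulVec_mulVec, mulVec_mulVec, Matrix.diagonal_transpose]
  have hpy2 : ∑ i, p i * (y i * y i) = x ⬝ᵥ x := by
    apply Finset.sum_congr rfl
    intro i _
    have h1 : Real.sqrt (p i) * Real.sqrt (p i) = p i := Real.mul_self_sqrt (hp i).le
    have h2 : Real.sqrt (p i) ≠ 0 := (hsq i).ne'
    show p i * ((Real.sqrt (p i))⁻¹ * x i * ((Real.sqrt (p i))⁻¹ * x i)) = x i * x i
    rw [← h1]
    field_simp
    rw [Real.sqrt_sq (hsq i).le]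
  have hpyw : ∑ i, p i * y i = 0 := by
    rw [← hxw]
    apply Finset.sum_congr rfl
    intro i _
    have h1 : Real.sqrt (p i) * Real.sqrt (p i) = p i := Real.mul_self_sqrt (hp i).le
    have h2 : Real.sqrt (p i) ≠ 0 := (hsq i).ne'
    show p i * ((Real.sqrt (p i))⁻¹ * x i) = Real.sqrt (p i) * x i
    rw [← h1]
    field_simp
    rw [Real.sqrt_sq (hsq i).le]
  have hpz : ∑ i, p i * z i = -c := by
    simp only [hzdef, mul_sub]
    rw [Finset.sum_sub_distrib, hpyw, ← Finset.sum_mul, hpsum]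
    ring
  have hxxle : x ⬝ᵥ x ≤ pmax * (z ⬝ᵥ z) := by
    have hexp : x ⬝ᵥ x = (∑ i, p i * (z i * z i)) - c * c := by
      rw [← hpy2]
      have hterm : ∀ i, p i * (y i * y i)
          = p i * (z i * z i) + (2 * c) * (p i * z i) + (c * c) * p i := by
        intro i
        have : y i = z i + c := by simp [hzdef]
        rw [this]; ring
      rw [Finset.sum_congr rfl (fun i _ => hterm i), Finset.sum_add_distrib,
        Finset.sum_add_distrib, ← Finset.mul_sum, ← Finset.mul_sum, hpz, hpsum]
      ring
    have h1 : ∑ i, p i * (z i * z i) ≤ pmax * (z ⬝ᵥ z) := by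
      rw [show z ⬝ᵥ z = ∑ i, z i * z i from rfl, Finset.mul_sum]
      apply Finset.sum_le_sum
      intro i _
      exact mul_le_mul_of_nonneg_right (hpmax.2 ⟨i, rfl⟩) (mul_self_nonneg _)
    nlinarith [mul_self_nonneg c]
  have hLT : Lᵀ = L := by
    ext i j
    have := congrFun (congrFun hL i) j
    simpa using this
  have hone : ∀ v : Fin n → ℝ, (fun _ => (1:ℝ)) ⬝ᵥ (L *ᵥ v) = 0 := by
    intro v
    rw [Matrix.dotProduct_mulVec, ← Matrix.mulVec_transpose, hLT, hker]
    exact zero_dotProduct v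
  have hzLz : z ⬝ᵥ L *ᵥ z = y ⬝ᵥ L *ᵥ y := by
    have h1 : z = y - c • (fun _ => (1:ℝ)) := by
      funext i; simp [hzdef]
    calc z ⬝ᵥ L *ᵥ z
        = (y - c • (fun _ => (1:ℝ))) ⬝ᵥ (L *ᵥ y - L *ᵥ (c • (fun _ => (1:ℝ)))) := by
          rw [h1, Matrix.mulVec_sub]
      _ = (y - c • (fun _ => (1:ℝ))) ⬝ᵥ (L *ᵥ y) := by
          rw [Matrix.mulVec_smul, hker, smul_zero, sub_zero]
      _ = y ⬝ᵥ (L *ᵥ y) - c * ((fun _ => (1:ℝ)) ⬝ᵥ (L *ᵥ y)) := by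
          rw [sub_dotProduct, smul_dotProduct, smul_eq_mul]
      _ = y ⬝ᵥ (L *ᵥ y) := by rw [hone y]; ring
  have hxpos : 0 < x ⬝ᵥ x := by
    obtain ⟨i, hi⟩ := Function.ne_iff.1 hx0
    have : 0 < x i * x i := mul_self_pos.2 hi
    exact Finset.sum_pos' (fun j _ => mul_self_nonneg _) ⟨i, Finset.mem_univ i, this⟩
  have hquad := lemmaA L hL hpsd hker z hsz
  have hl2 : 0 ≤ lambda2 L hL :=
    lambda2_nonneg L hL (fun i =>
      Matrix.PosSemidef.eigenvalues_nonneg (posSemidef_iff_dotProduct_mulVec.mpr ⟨hL, fun v => by simpa using hpsd v⟩) i)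
  have hfin : lambda2 L hL * (x ⬝ᵥ x) ≤ (pmax * b) * (x ⬝ᵥ x) := by
    calc lambda2 L hL * (x ⬝ᵥ x)
        ≤ lambda2 L hL * (pmax * (z ⬝ᵥ z)) := mul_le_mul_of_nonneg_left hxxle hl2
      _ = pmax * (lambda2 L hL * (z ⬝ᵥ z)) := by ring
      _ ≤ pmax * (z ⬝ᵥ L *ᵥ z) := mul_le_mul_of_nonneg_left hquad hpm.le
      _ = pmax * (x ⬝ᵥ Lt *ᵥ x) := by rw [hzLz, ← hxLt]
      _ ≤ pmax * (b * (x ⬝ᵥ x)) := mul_le_mul_of_nonneg_left hxq hpm.le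
      _ = (pmax * b) * (x ⬝ᵥ x) := by ring
  have hle2 : lambda2 L hL ≤ pmax * b := le_of_mul_le_mul_right hfin hxpos
  rw [inv_mul_eq_div, div_le_iff₀ hpm]
  linarith [hle2]

theorem lambda2_scaled_lower_bound {n : ℕ}
    (p : Fin n → ℝ) (hp : ∀ i, 0 < p i) (hpsum : ∑ i, p i = 1)
    (pmax : ℝ) (hpmax : IsGreatest (Set.range p) pmax)
    (L : Matrix (Fin n) (Fin n) ℝ) (hL : L.IsHermitian)
    (hpsd : ∀ x : Fin n → ℝ, 0 ≤ x ⬝ᵥ L.mulVec x)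
    (hker : L.mulVec (fun _ => 1) = 0)
    (Lt : Matrix (Fin n) (Fin n) ℝ)
    (hLt : Lt = (Matrix.diagonal fun i => (Real.sqrt (p i))⁻¹) * L *
        (Matrix.diagonal fun i => (Real.sqrt (p i))⁻¹))
    (hLtH : Lt.IsHermitian) :
    pmax⁻¹ * lambda2 L hL ≤ lambda2 Lt hLtH := by
  by_cases hn2 : n < 2
  · have h20 : lambda2 L hL = 0 := by
      apply List.getD_eq_default
      rw [Multiset.length_sort, Multiset.card_map]
      simpa using Nat.lt_succ_iff.1 hn2
    have h21 : lambda2 Lt hLtH = 0 := by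
      apply List.getD_eq_default
      rw [Multiset.length_sort, Multiset.card_map]
      simpa using Nat.lt_succ_iff.1 hn2
    rw [h20, h21, mul_zero]
  push_neg at hn2
  have hn : 0 < n := by omega
  have hsq : ∀ i, 0 < Real.sqrt (p i) := fun i => Real.sqrt_pos.2 (hp i)
  -- quadratic form of Lt
  have hLtq : ∀ v : Fin n → ℝ,
      v ⬝ᵥ Lt *ᵥ v = ((Matrix.diagonal fun i => (Real.sqrt (p i))⁻¹) *ᵥ v) ⬝ᵥ
        (L *ᵥ ((Matrix.diagonal fun i => (Real.sqrt (p i))⁻¹) *ᵥ v)) := by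
    intro v
    rw [hLt, dot_mulVec_mulVec, mulVec_mulVec, Matrix.diagonal_transpose]
  have hLtpsd : ∀ v : Fin n → ℝ, 0 ≤ v ⬝ᵥ Lt *ᵥ v := by
    intro v
    rw [hLtq v]
    exact hpsd _
  have hLteig : ∀ i, 0 ≤ hLtH.eigenvalues i := fun i =>
    Matrix.PosSemidef.eigenvalues_nonneg (posSemidef_iff_dotProduct_mulVec.mpr ⟨hLtH, fun v => by simpa using hLtpsd v⟩) i
  have hLtw : Lt *ᵥ (fun i => Real.sqrt (p i)) = 0 := by
    rw [hLt, ← mulVec_mulVec, ← mulVec_mulVec]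
    have h1 : (Matrix.diagonal fun i => (Real.sqrt (p i))⁻¹) *ᵥ (fun i => Real.sqrt (p i))
        = (fun _ => (1:ℝ)) := by
      funext i
      rw [Matrix.mulVec_diagonal]
      exact inv_mul_cancel₀ (hsq i).ne'
    rw [h1, hker, Matrix.mulVec_zero]
  have hLtT : Ltᵀ = Lt := by
    ext i j
    have := congrFun (congrFun hLtH i) j
    simpa using this
  -- the sorted eigenvalue list of Lt
  have hlen : ((Finset.univ.val.map hLtH.eigenvalues).sort (· ≤ ·)).length = n := by
    rw [Multiset.length_sort, Multiset.card_map]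
    simp
  rcases hll : ((Finset.univ.val.map hLtH.eigenvalues).sort (· ≤ ·)) with _ | ⟨a, _ | ⟨b, t⟩⟩
  · rw [hll] at hlen; simp at hlen; omega
  · rw [hll] at hlen; simp at hlen; omega
  have hval : lambda2 Lt hLtH = b := by
    rw [lambda2, hll]
    rfl
  have hs := Multiset.pairwise_sort (r := (· ≤ ·)) (s := Finset.univ.val.map hLtH.eigenvalues)
  rw [hll] at hs
  have hab : a ≤ b := (List.pairwise_cons.1 hs).1 b (by simp)
  have ha0 : 0 ≤ a := by
    have hmem : a ∈ Multiset.map hLtH.eigenvalues Finset.univ.val := by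
      rw [← Multiset.mem_sort (· ≤ ·), hll]; simp
    obtain ⟨i, _, hi⟩ := Multiset.mem_map.1 hmem
    rw [← hi]; exact hLteig i
  have hb0 : 0 ≤ b := le_trans ha0 hab
  -- orthonormality of the eigenvector basis, in dotProduct form
  have hvv : ∀ j k, (⇑(hLtH.eigenvectorBasis j) : Fin n → ℝ) ⬝ᵥ ⇑(hLtH.eigenvectorBasis k)
      = if j = k then 1 else 0 := by
    intro j k
    have h2 := orthonormal_iff_ite.1 hLtH.eigenvectorBasis.orthonormal j k
    rw [PiLp.inner_apply] at h2
    simpa [RCLike.inner_apply, dotProduct, mul_comm] using h2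
  rw [hval]
  -- produce the test vector x
  suffices hsuff : ∃ x : Fin n → ℝ, x ≠ 0 ∧ (∑ i, Real.sqrt (p i) * x i = 0) ∧
      x ⬝ᵥ Lt *ᵥ x ≤ b * (x ⬝ᵥ x) by
    obtain ⟨x, h1, h2, h3⟩ := hsuff
    exact key_step hn p hp hpsum pmax hpmax L hL hpsd hker Lt hLt b x h1 h2 h3
  by_cases hbpos : 0 < b
  · -- b is a positive eigenvalue: use its eigenvector
    obtain ⟨j, hj⟩ : ∃ j, hLtH.eigenvalues j = b := by
      have hmem : b ∈ Multiset.map hLtH.eigenvalues Finset.univ.val := by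
        rw [← Multiset.mem_sort (· ≤ ·), hll]; simp
      obtain ⟨i, _, hi⟩ := Multiset.mem_map.1 hmem
      exact ⟨i, hi⟩
    set u : Fin n → ℝ := ⇑(hLtH.eigenvectorBasis j) with hu
    have heig : Lt *ᵥ u = b • u := by
      rw [hu, hLtH.mulVec_eigenvectorBasis, hj]
    have huu : u ⬝ᵥ u = 1 := by simpa using hvv j j
    refine ⟨u, ?_, ?_, ?_⟩
    · intro h0
      rw [h0] at huu
      simp at huu
    · have h2 : (fun i => Real.sqrt (p i)) ⬝ᵥ (Lt *ᵥ u) = 0 := by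
        rw [Matrix.dotProduct_mulVec, ← Matrix.mulVec_transpose, hLtT, hLtw]
        exact zero_dotProduct u
      rw [heig, dotProduct_smul, smul_eq_mul] at h2
      have h3 := (mul_eq_zero.1 h2).resolve_left (ne_of_gt hbpos)
      exact h3
    · rw [heig, dotProduct_smul, smul_eq_mul]
  · -- b = 0 : the kernel of Lt is at least 2-dimensional
    have hb : b = 0 := le_antisymm (not_lt.1 hbpos) hb0
    have ha : a = 0 := le_antisymm (hb ▸ hab) ha0
    have hcnt : 2 ≤ Multiset.count (0:ℝ) (Finset.univ.val.map hLtH.eigenvalues) := by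
      have hcoe : (Finset.univ.val.map hLtH.eigenvalues) = ((a :: b :: t : List ℝ) : Multiset ℝ) := by
        rw [← Multiset.sort_eq (r := (· ≤ ·)) (s := Finset.univ.val.map hLtH.eigenvalues), hll]
      rw [hcoe, ha, hb, Multiset.coe_count]
      simp [List.count_cons]
    rw [Multiset.count_map] at hcnt
    have hcard : 1 < (Finset.univ.filter (fun i => (0:ℝ) = hLtH.eigenvalues i)).card := by
      have heq : (Finset.univ.filter (fun i => (0:ℝ) = hLtH.eigenvalues i)).card
          = Multiset.card (Multiset.filter (fun i => (0:ℝ) = hLtH.eigenvalues i)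
              Finset.univ.val) := by
        rw [Finset.card_def, Finset.filter_val]
      rw [heq]
      omega
    obtain ⟨j, hjS, k, hkS, hjk⟩ := Finset.one_lt_card.1 hcard
    have hj0 : hLtH.eigenvalues j = 0 := ((Finset.mem_filter.1 hjS).2).symm
    have hk0 : hLtH.eigenvalues k = 0 := ((Finset.mem_filter.1 hkS).2).symm
    set u : Fin n → ℝ := ⇑(hLtH.eigenvectorBasis j) with hu
    set v : Fin n → ℝ := ⇑(hLtH.eigenvectorBasis k) with hv
    have hku : Lt *ᵥ u = 0 := by rw [hu, hLtH.mulVec_eigenvectorBasis, hj0, zero_smul]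
    have hkv : Lt *ᵥ v = 0 := by rw [hv, hLtH.mulVec_eigenvectorBasis, hk0, zero_smul]
    have huu : u ⬝ᵥ u = 1 := by simpa using hvv j j
    have hvv2 : v ⬝ᵥ v = 1 := by simpa using hvv k k
    have huv : u ⬝ᵥ v = 0 := by simpa [hjk] using hvv j k
    set α : ℝ := (fun i => Real.sqrt (p i)) ⬝ᵥ u with hα
    set β : ℝ := (fun i => Real.sqrt (p i)) ⬝ᵥ v with hβ
    by_cases hα0 : α = 0
    · refine ⟨u, ?_, hα0, ?_⟩
      · intro h0
        rw [h0] at huu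
        simp at huu
      · rw [hku, dotProduct_zero, hb, zero_mul]
    · refine ⟨fun i => β * u i - α * v i, ?_, ?_, ?_⟩
      · intro h0
        have hxx : (fun i => β * u i - α * v i) ⬝ᵥ (fun i => β * u i - α * v i)
            = β * β + α * α := by
          show (∑ i, (β * u i - α * v i) * (β * u i - α * v i)) = β * β + α * α
          have hterm : ∀ i, (β * u i - α * v i) * (β * u i - α * v i)
              = (β * β) * (u i * u i) - (2 * α * β) * (u i * v i) + (α * α) * (v i * v i) :=
            fun i => by ring
          rw [Finset.sum_congr rfl (fun i _ => hterm i)]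
          rw [Finset.sum_add_distrib, Finset.sum_sub_distrib, ← Finset.mul_sum,
            ← Finset.mul_sum, ← Finset.mul_sum]
          rw [show (∑ i, u i * u i) = u ⬝ᵥ u from rfl, show (∑ i, u i * v i) = u ⬝ᵥ v from rfl,
            show (∑ i, v i * v i) = v ⬝ᵥ v from rfl, huu, huv, hvv2]
          ring
        rw [h0] at hxx
        simp only [zero_dotProduct] at hxx
        nlinarith [mul_self_nonneg α, mul_self_nonneg β, mul_self_pos.2 hα0]
      · have hterm : ∀ i, Real.sqrt (p i) * (β * u i - α * v i)
            = β * (Real.sqrt (p i) * u i) - α * (Real.sqrt (p i) * v i) := fun i => by ring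
        rw [Finset.sum_congr rfl (fun i _ => hterm i), Finset.sum_sub_distrib,
          ← Finset.mul_sum, ← Finset.mul_sum]
        rw [show (∑ i, Real.sqrt (p i) * u i) = α from rfl,
          show (∑ i, Real.sqrt (p i) * v i) = β from rfl]
        ring
      · have hx' : (fun i => β * u i - α * v i) = β • u - α • v := by
          funext i
          simp [Pi.smul_apply, smul_eq_mul]
        rw [hx', Matrix.mulVec_sub, Matrix.mulVec_smul, Matrix.mulVec_smul, hku, hkv,
          smul_zero, smul_zero, sub_zero, dotProduct_zero, hb, zero_mul]
end
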